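/- Let π be a regular multiforcing and let p, q ∈ MT(π) be multitrees that are not somewhere almost disjoint. Then p and q are compatible in MT(π): there exists a multitree r ∈ MT(π) with r ≤ p and r ≤ q. -/
import Mathlib


noncomputable section

/-- Finite binary strings. -/
abbrev Str : Type := List Bool

/-- Points of Cantor space `2^ω`. -/
abbrev Pt : Type := ℕ → Bool

/-- The length-`n` initial segment of a point of Cantor space, as a string. -/
def seg (a : Pt) (n : ℕ) : Str := (List.range n).map a

/-- A tree: a set of strings closed under initial segments. -/
def IsTree (T : Set Str) : Prop := ∀ ⦃s t : Str⦄, s <+: t → t ∈ T → s ∈ T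

/-- A perfect tree: a nonempty tree in which every string has two
incomparable extensions inside the tree. -/
def IsPerfectTree (T : Set Str) : Prop :=
  T.Nonempty ∧ IsTree T ∧
    ∀ s ∈ T, ∃ t₁ t₂, t₁ ∈ T ∧ t₂ ∈ T ∧ s <+: t₁ ∧ s <+: t₂ ∧ ¬ t₁ <+: t₂ ∧ ¬ t₂ <+: t₁

/-- The restriction `T↾s = {t ∈ T : s ⊆ t or t ⊆ s}`. -/
def Tres (T : Set Str) (s : Str) : Set Str := {t ∈ T | s <+: t ∨ t <+: s}

/-- The set `[T]` of branches of a tree `T`. -/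
def branches (T : Set Str) : Set Pt := {a | ∀ n, seg a n ∈ T}

/-- `s` is the stem (root) of `T`: the longest `s ∈ T` with `T = T↾s`. -/
def IsStem (T : Set Str) (s : Str) : Prop :=
  s ∈ T ∧ T = Tres T s ∧ ∀ t ∈ T, T = Tres T t → t <+: s

open Classical in
/-- The stem `root(T)` of a tree (junk value `[]` if there is none). -/
def stem (T : Set Str) : Str := if h : ∃ s, IsStem T s then h.choose else []

/-- Simple splitting `T→i = T↾(root(T)⌢i)`. -/
def splitOne (T : Set Str) (i : Bool) : Set Str := Tres T (stem T ++ [i])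

/-- Iterated splitting `T→u`. -/
def splitIter (T : Set Str) (u : Str) : Set Str := u.foldl splitOne T

/-- Almost disjointness of trees: finite intersection. -/
def AD (S T : Set Str) : Prop := (S ∩ T).Finite

/-- A perfect-tree forcing notion: a nonempty set of perfect trees closed
under restrictions. -/
def IsPTF (P : Set (Set Str)) : Prop :=
  P.Nonempty ∧ (∀ T ∈ P, IsPerfectTree T) ∧ ∀ T ∈ P, ∀ s ∈ T, Tres T s ∈ P

/-- `A` is relatively clopen in `B` (as a subspace of Cantor space). -/
def ClopenIn (A B : Set Pt) : Prop := IsClopen ((fun x : B => (x : Pt)) ⁻¹' A)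

/-- `A` is relatively open in `B` (as a subspace of Cantor space). -/
def OpenIn (A B : Set Pt) : Prop := IsOpen ((fun x : B => (x : Pt)) ⁻¹' A)

/-- A special perfect-tree forcing notion: `P = {T↾s : s ∈ T ∈ A}` for an
antichain (pairwise a.d. set) `A ⊆ P`. -/
def SpecialPTF (P : Set (Set Str)) : Prop :=
  ∃ A ⊆ P, A.Pairwise AD ∧ P = {R | ∃ T ∈ A, ∃ s ∈ T, R = Tres T s}

/-- A regular perfect-tree forcing notion: `[S] ∩ [T]` is relatively clopen
in `[S]` or in `[T]`, for all `S, T ∈ P`. -/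
def RegularPTF (P : Set (Set Str)) : Prop :=
  ∀ S ∈ P, ∀ T ∈ P,
    ClopenIn (branches S ∩ branches T) (branches S) ∨
    ClopenIn (branches S ∩ branches T) (branches T)

/-- `T ⊆ᶠ ⋃ D`: `[T]` is covered by finitely many `[S]`, `S ∈ D`. -/
def SqFin (T : Set Str) (D : Set (Set Str)) : Prop :=
  ∃ D' ⊆ D, D'.Finite ∧ branches T ⊆ ⋃ S ∈ D', branches S

/-- `P ⊑ Q`: `Q` is a refinement of `P`. -/
def Refines (P Q : Set (Set Str)) : Prop :=
  (∀ T ∈ P, ∃ S ∈ Q, S ⊆ T) ∧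
  (∀ S ∈ Q, SqFin S P) ∧
  (∀ S ∈ Q, ∀ T ∈ P, ClopenIn (branches S ∩ branches T) (branches S) ∧ ¬ T ⊆ S)

/-- `D` is dense in `P`. -/
def DenseIn (D P : Set (Set Str)) : Prop := ∀ T ∈ P, ∃ S ∈ D, S ⊆ T

/-- `D` is pre-dense in `P`. -/
def PreDenseIn (D P : Set (Set Str)) : Prop :=
  DenseIn {T ∈ P | ∃ S ∈ D, T ⊆ S} P

/-- `P ⊑_D Q`: `Q` locks `D` over `P`. -/
def Locks (P D Q : Set (Set Str)) : Prop :=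
  Refines P Q ∧ ∀ S ∈ Q, SqFin S D

/-- A finite splitting system of height `n` over `P`. -/
def IsFSS (P : Set (Set Str)) (n : ℕ) (φ : Str → Set Str) : Prop :=
  (∀ s : Str, s.length ≤ n → φ s ∈ P) ∧
  ∀ (s : Str) (i : Bool), s.length < n → φ (s ++ [i]) ⊆ splitOne (φ s) i

/-- The index set `ω₁ × ω`. -/
abbrev Idx : Type 1 := {xi : Ordinal // xi < (Cardinal.aleph 1).ord} × ℕ

/-- A multitree: a map with finite domain `|p| ⊆ ω₁ × ω` whose values are
perfect trees. -/
structure Multitree : Type 1 where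
  dom : Set Idx
  fin : dom.Finite
  val : Idx → Set Str
  perf : ∀ i ∈ dom, IsPerfectTree (val i)

/-- Componentwise ordering of multitrees: `q ≤ p`. -/
def MTle (q p : Multitree) : Prop :=
  p.dom ⊆ q.dom ∧ ∀ i ∈ p.dom, q.val i ⊆ p.val i

/-- Multitrees `p, q` are somewhere almost disjoint. -/
def SomewhereAD (p q : Multitree) : Prop :=
  ∃ i ∈ p.dom ∩ q.dom, AD (p.val i) (q.val i)

/-- A multiforcing: a map on `|π| ⊆ ω₁ × ω` whose values are perfect-tree
forcing notions. -/
structure Multiforcing : Type 1 where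
  dom : Set Idx
  val : Idx → Set (Set Str)
  ptf : ∀ i ∈ dom, IsPTF (val i)

/-- A regular multiforcing: each component is regular. -/
def MFRegular (pi : Multiforcing) : Prop := ∀ i ∈ pi.dom, RegularPTF (pi.val i)

/-- `MT(π)`: the set of multitrees built from `π`. -/
def MT (pi : Multiforcing) : Set Multitree :=
  {p | p.dom ⊆ pi.dom ∧ ∀ i ∈ p.dom, p.val i ∈ pi.val i}

/-- The cofinite-dimensional cube `[p]` determined by a multitree `p`. -/
def mcube (p : Multitree) : Set (Idx → Pt) :=
  {x | ∀ i ∈ p.dom, x i ∈ branches (p.val i)}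


section AuxLemmas

lemma seg_length (a : Pt) (n : ℕ) : (seg a n).length = n := by simp [seg]

lemma seg_getElem (a : Pt) {n i : ℕ} (h : i < n) :
    (seg a n)[i]'(by simpa [seg] using h) = a i := by simp [seg]

lemma seg_prefix (a : Pt) {n m : ℕ} (h : n ≤ m) : seg a n <+: seg a m := by
  have : seg a n = (seg a m).take n := by
    simp [seg, ← List.map_take, List.take_range, Nat.min_eq_left h]
  rw [this]; exact List.take_prefix _ _

lemma seg_eq_of_agree {a b : Pt} {n : ℕ} (h : ∀ i < n, a i = b i) : seg a n = seg b n := by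
  apply List.ext_getElem (by simp [seg])
  intro i h1 h2
  rw [seg_getElem a (by simpa [seg] using h1), seg_getElem b (by simpa [seg] using h1)]
  exact h i (by simpa [seg] using h1)

lemma agree_of_seg_eq {a b : Pt} {n : ℕ} (h : seg a n = seg b n) : ∀ i < n, a i = b i := by
  intro i hi
  have := congrArg (fun l => l.getD i false) h
  simpa [seg, List.getD_map, List.getD_eq_getElem, hi] using this

lemma seg_of_str (s : Str) : seg (fun i => s.getD i false) s.length = s := by
  apply List.ext_getElem (by simp [seg])
  intro i h1 h2
  rw [seg_getElem _ (by simpa [seg] using h1)]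
  simp [List.getD_eq_getElem, h2]

lemma isClosed_segSet (S : Set Str) (n : ℕ) : IsClosed {a : Pt | seg a n ∈ S} := by
  rw [← isOpen_compl_iff, isOpen_iff_mem_nhds]
  intro a ha
  have hmem : (Set.Iio n).pi (fun i => {a i}) ∈ nhds a :=
    set_pi_mem_nhds (Set.finite_Iio n) (fun i _ => by simp [nhds_discrete])
  apply Filter.mem_of_superset hmem
  intro b hb
  have : seg b n = seg a n := seg_eq_of_agree (fun i hi => hb i hi)
  simpa [Set.mem_compl_iff, this] using ha

lemma exists_branch_of_infinite {S : Set Str} (ht : IsTree S) (hinf : S.Infinite) :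
    (branches S).Nonempty := by
  have hne : ∀ n, ∃ a : Pt, seg a n ∈ S := by
    intro n
    have : ∃ s ∈ S, ¬ s.length < n := by
      by_contra hc
      push_neg at hc
      exact hinf ((List.finite_length_lt Bool n).subset (fun s hs => hc s hs))
    obtain ⟨s, hsS, hlen⟩ := this
    push_neg at hlen
    refine ⟨fun i => s.getD i false, ?_⟩
    have hp : seg (fun i => s.getD i false) n <+: s := by
      calc seg (fun i => s.getD i false) n
          <+: seg (fun i => s.getD i false) s.length := seg_prefix _ hlen
        _ = s := seg_of_str s
    exact ht hp hsS
  have key := IsCompact.nonempty_iInter_of_sequence_nonempty_isCompact_isClosed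
    (fun n => {a : Pt | seg a n ∈ S})
    (fun n a (ha : seg a (n+1) ∈ S) => ht (seg_prefix a (Nat.le_succ n)) ha)
    (fun n => hne n)
    ((isClosed_segSet S 0).isCompact)
    (fun n => isClosed_segSet S n)
  obtain ⟨a, ha⟩ := key
  exact ⟨a, fun n => by simpa using Set.mem_iInter.1 ha n⟩

lemma exists_branch_through {S : Set Str} (hS : IsPerfectTree S) {t : Str} (htS : t ∈ S) :
    ∃ a ∈ branches S, seg a t.length = t := by
  obtain ⟨-, htree, hsplit⟩ := hS
  have step : ∀ u ∈ S, ∃ u', u' ∈ S ∧ u <+: u' ∧ u'.length = u.length + 1 := by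
    intro u hu
    obtain ⟨t₁, t₂, h1, h2, hp1, hp2, hn1, hn2⟩ := hsplit u hu
    have hne : u ≠ t₁ := fun h => hn1 (h ▸ hp2)
    have hlt : u.length < t₁.length := by
      rcases lt_or_eq_of_le hp1.length_le with h | h
      · exact h
      · exact absurd (hp1.eq_of_length h) hne
    refine ⟨t₁.take (u.length + 1), htree (List.take_prefix _ _) h1, ?_, ?_⟩
    · have hu' : u = t₁.take u.length := List.prefix_iff_eq_take.1 hp1
      rw [List.prefix_iff_eq_take, List.take_take]
      simpa [Nat.min_eq_left (Nat.le_succ u.length)] using hu'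
    · simp [Nat.min_eq_left (Nat.succ_le_of_lt hlt)]
  choose f hf1 hf2 hf3 using step
  obtain ⟨G, hG1, hG0, hGstep⟩ :
      ∃ G : ℕ → Str, (∀ n, G n ∈ S) ∧ G 0 = t ∧
        ∀ n, G n <+: G (n+1) ∧ (G (n+1)).length = (G n).length + 1 := by
    refine ⟨fun n => (Nat.rec (motive := fun _ => {u : Str // u ∈ S}) ⟨t, htS⟩
      (fun _ p => ⟨f p.1 p.2, hf1 p.1 p.2⟩) n).1, fun n => ?_, rfl, fun n => ?_⟩
    · exact (Nat.rec (motive := fun _ => {u : Str // u ∈ S}) ⟨t, htS⟩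
        (fun _ p => ⟨f p.1 p.2, hf1 p.1 p.2⟩) n).2
    · exact ⟨hf2 _ _, hf3 _ _⟩
  have hGlen : ∀ n, (G n).length = t.length + n := by
    intro n; induction n with
    | zero => simp [hG0]
    | succ k ih => rw [(hGstep k).2, ih]; omega
  have hGmono : ∀ m n, m ≤ n → G m <+: G n := by
    intro m n h
    induction n with
    | zero => rw [Nat.le_zero.1 h]
    | succ k ih =>
      rcases Nat.lt_or_ge m (k+1) with h' | h'
      · exact (ih (Nat.lt_succ_iff.1 h')).trans (hGstep k).1
      · rw [le_antisymm h h']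
  set a : Pt := fun i => (G (i+1)).getD i false with ha
  have hkey : ∀ n k, n ≤ (G k).length → seg a n = (G k).take n := by
    intro n k hn
    apply List.ext_getElem (by simp [seg_length, Nat.min_eq_left hn])
    intro i h1 h2
    have hi : i < n := by simpa [seg_length] using h1
    rw [seg_getElem a hi]
    have hilen : i < (G (i+1)).length := by rw [hGlen]; omega
    have haval : a i = (G (i+1))[i]'hilen := List.getD_eq_getElem _ _ hilen
    rw [haval, List.getElem_take]
    rcases Nat.le_total (i+1) k with h | h
    · exact (hGmono _ _ h).getElem hilen
    · exact ((hGmono _ _ h).getElem (by omega)).symm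
  refine ⟨a, fun n => ?_, ?_⟩
  · have h : n ≤ (G n).length := by rw [hGlen]; omega
    rw [hkey n n h]; exact htree (List.take_prefix _ _) (hG1 n)
  · have h0 : t.length ≤ (G 0).length := by rw [hG0]
    rw [hkey t.length 0 h0, hG0]
    simp

lemma exists_cylinder {S T : Set Str} (hcl : ClopenIn (branches S ∩ branches T) (branches S))
    {a : Pt} (haS : a ∈ branches S) (haT : a ∈ branches T) :
    ∃ n, ∀ b ∈ branches S, seg b n = seg a n → b ∈ branches T := by
  obtain ⟨U, hUopen, hUeq⟩ := isOpen_induced_iff.1 hcl.isOpen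
  have haU : a ∈ U := by
    have : (⟨a, haS⟩ : branches S) ∈ (fun x : branches S => (x : Pt)) ⁻¹' U := by
      rw [hUeq]; exact ⟨haS, haT⟩
    exact this
  obtain ⟨I, u, hIu, hsub⟩ := isOpen_pi_iff.1 hUopen a haU
  refine ⟨I.sup (· + 1), fun b hbS hseg => ?_⟩
  have hagree := agree_of_seg_eq hseg
  have hbU : b ∈ U := by
    apply hsub
    intro i hi
    have hilt : i < I.sup (· + 1) := Nat.lt_of_lt_of_le (Nat.lt_succ_self i)
      (Finset.le_sup (f := (· + 1)) hi)
    rw [hagree i hilt]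
    exact (hIu i hi).2
  have : (⟨b, hbS⟩ : branches S) ∈ (fun x : branches S => (x : Pt)) ⁻¹' U := hbU
  rw [hUeq] at this
  exact this.2

lemma compat_half {S T : Set Str} (hS : IsPerfectTree S) (hTt : IsTree T)
    (had : ¬ AD S T) (hcl : ClopenIn (branches S ∩ branches T) (branches S)) :
    ∃ s ∈ S, Tres S s ⊆ T := by
  have htree : IsTree (S ∩ T) := fun s t hp ht => ⟨hS.2.1 hp ht.1, hTt hp ht.2⟩
  obtain ⟨a, ha⟩ := exists_branch_of_infinite htree (by rwa [AD, ← Set.not_infinite, not_not] at had)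
  have haS : a ∈ branches S := fun n => (ha n).1
  have haT : a ∈ branches T := fun n => (ha n).2
  obtain ⟨n, hn⟩ := exists_cylinder hcl haS haT
  refine ⟨seg a n, haS n, ?_⟩
  rintro t ⟨htS, hor | hor⟩
  · obtain ⟨b, hbS, hbseg⟩ := exists_branch_through hS htS
    have hnle : n ≤ t.length := by
      have := hor.length_le; simpa [seg_length] using this
    have h1 : seg b n <+: t := hbseg ▸ seg_prefix b hnle
    have e1 := List.prefix_iff_eq_take.1 h1
    have e2 := List.prefix_iff_eq_take.1 hor
    rw [seg_length] at e1 e2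
    have hsb : seg b n = seg a n := by rw [e1, e2]
    have hbT : b ∈ branches T := hn b hbS hsb
    rw [← hbseg]
    exact hbT t.length
  · exact hTt hor (haT n)

lemma compat_trees {P : Set (Set Str)} (hreg : RegularPTF P) (hptf : IsPTF P)
    {S T : Set Str} (hS : S ∈ P) (hT : T ∈ P) (had : ¬ AD S T) :
    ∃ R ∈ P, R ⊆ S ∧ R ⊆ T := by
  obtain ⟨-, hperf, hres⟩ := hptf
  rcases hreg S hS T hT with hcl | hcl
  · obtain ⟨s, hsS, hsub⟩ := compat_half (hperf S hS) (hperf T hT).2.1 had hcl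
    exact ⟨Tres S s, hres S hS s hsS, fun t ht => ht.1, hsub⟩
  · have had' : ¬ AD T S := fun h => had (by rwa [AD, Set.inter_comm])
    rw [Set.inter_comm (branches S)] at hcl
    obtain ⟨s, hsT, hsub⟩ := compat_half (hperf T hT) (hperf S hS).2.1 had' hcl
    exact ⟨Tres T s, hres T hT s hsT, hsub, fun t ht => ht.1⟩

end AuxLemmas

/-- Corollary 2.14 (sad): in a regular multiforcing, multitrees that are not
somewhere almost disjoint are compatible in `MT(π)`. -/
theorem stmt18 (pi : Multiforcing) (hreg : MFRegular pi)
    (p q : Multitree) (hp : p ∈ MT pi) (hq : q ∈ MT pi)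
    (h : ¬ SomewhereAD p q) :
    ∃ r ∈ MT pi, MTle r p ∧ MTle r q := by
  classical
  have key : ∀ i, i ∈ p.dom ∩ q.dom → ∃ R, R ∈ pi.val i ∧ R ⊆ p.val i ∧ R ⊆ q.val i := by
    intro i hi
    have hpi : i ∈ pi.dom := hp.1 hi.1
    have hnad : ¬ AD (p.val i) (q.val i) := fun hAD => h ⟨i, hi, hAD⟩
    obtain ⟨R, hR, h1, h2⟩ := compat_trees (hreg i hpi) (pi.ptf i hpi)
      (hp.2 i hi.1) (hq.2 i hi.2) hnad
    exact ⟨R, hR, h1, h2⟩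
  choose! R hR1 hR2 hR3 using key
  refine ⟨⟨p.dom ∪ q.dom, p.fin.union q.fin,
    fun i => if i ∈ p.dom ∩ q.dom then R i else if i ∈ p.dom then p.val i else q.val i,
    ?_⟩, ⟨?_, ?_⟩, ⟨?_, ?_⟩, ⟨?_, ?_⟩⟩
  · intro i hi
    by_cases hib : i ∈ p.dom ∩ q.dom
    · simp only [hib, if_true]
      exact (pi.ptf i (hp.1 hib.1)).2.1 _ (hR1 i hib)
    · simp only [hib, if_false]
      by_cases hip : i ∈ p.dom
      · simp only [hip, if_true]; exact p.perf i hip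
      · simp only [hip, if_false]
        exact q.perf i (hi.resolve_left hip)
  · exact Set.union_subset hp.1 hq.1
  · intro i hi
    by_cases hib : i ∈ p.dom ∩ q.dom
    · simp only [hib, if_true]; exact hR1 i hib
    · simp only [hib, if_false]
      by_cases hip : i ∈ p.dom
      · simp only [hip, if_true]; exact hp.2 i hip
      · simp only [hip, if_false]; exact hq.2 i (hi.resolve_left hip)
  · exact Set.subset_union_left
  · intro i hi
    by_cases hib : i ∈ p.dom ∩ q.dom
    · simp only [hib, if_true]; exact hR2 i hib
    · simp only [hib, if_false, hi, if_true]
      exact subset_rfl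
  · exact Set.subset_union_right
  · intro i hi
    by_cases hib : i ∈ p.dom ∩ q.dom
    · simp only [hib, if_true]; exact hR3 i hib
    · have hip : i ∉ p.dom := fun hp' => hib ⟨hp', hi⟩
      simp only [hib, if_false, hip]
      exact subset_rfl


end
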